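/- Let λ > 0 be a real number, R₀ > 0, let h be a holomorphic function on the open disc {z ∈ ℂ : |z| < R₀} with h(0) ≠ 0, let −π < α ≤ β < π, and define g(z) := z^λ · h(z), where z^λ denotes the principal branch. Then there exist r ∈ (0, R₀) and C > 0 with the following property. Let μ : [0,1] → ℂ be any continuously differentiable path with nowhere-vanishing derivative such that 0 < |μ(s)| ≤ r and α ≤ arg μ(s) ≤ β for all s, and set ‖μ‖ := max_s |μ(s)| and E := sup_s [[μ′(s)/(i·μ(s))]] ∈ [0, +∞]. Then: (i) max_s |g(μ(s))| ≤ C·‖μ‖^λ; and (ii) if E + C·‖μ‖ < π/2, then for every s one has [[(g∘μ)′(s)/(i·g(μ(s)))]] ≤ E + C·‖μ‖; in other words, the rugosity of the image path g∘μ is at most the rugosity of μ plus C·‖μ‖. -/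

import Mathlib

/-- The rugosity bracket `[[z]]`: it equals `|arg z|` if `|arg z| < π/2`, and `+∞` otherwise. -/
noncomputable def rugosityBracket (z : ℂ) : ENNReal :=
  if |Complex.arg z| < Real.pi / 2 then ENNReal.ofReal |Complex.arg z| else ⊤

open Real Complex in
lemma aux_arg_le {w : ℂ} (hw : 0 < w.re) :
    |Complex.arg w| ≤ Real.pi / 2 * (|w.im| / ‖w‖) := by
  have hw0 : w ≠ 0 := fun h => by simp [h] at hw
  have habs : 0 < ‖w‖ := norm_pos_iff.mpr hw0
  have hlt : |Complex.arg w| < Real.pi / 2 :=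
    Complex.abs_arg_lt_pi_div_two_iff.2 (Or.inl hw)
  have hsin : Real.sin (Complex.arg w) = w.im / ‖w‖ := Complex.sin_arg w
  have hjordan : 2 / Real.pi * |Complex.arg w| ≤ Real.sin |Complex.arg w| :=
    Real.mul_le_sin (abs_nonneg _) hlt.le
  have hsinabs : Real.sin |Complex.arg w| = |Real.sin (Complex.arg w)| := by
    rcases le_or_gt 0 (Complex.arg w) with h0 | h0
    · rw [_root_.abs_of_nonneg h0, _root_.abs_of_nonneg]
      exact Real.sin_nonneg_of_nonneg_of_le_pi h0 (by linarith [le_abs_self w.arg, Real.pi_pos])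
    · rw [abs_of_neg h0, Real.sin_neg, abs_of_neg]
      exact Real.sin_neg_of_neg_of_neg_pi_lt h0 (by nlinarith [abs_of_neg h0, hlt, Real.pi_pos])
  have : |Real.sin (Complex.arg w)| = |w.im| / ‖w‖ := by
    rw [hsin, abs_div, _root_.abs_of_pos habs]
  rw [hsinabs, this] at hjordan
  have hpi := Real.pi_pos
  rw [div_mul_eq_mul_div, div_le_iff₀ hpi] at hjordan
  nlinarith [div_nonneg (abs_nonneg w.im) habs.le]

set_option maxHeartbeats 1000000 in
/-- For `g(z) = z^λ·h(z)` with `λ > 0`, `h` holomorphic near `0`, `h(0) ≠ 0`, there are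
`r ∈ (0,R₀)` and `C > 0` such that any `C¹` path `μ` in the punctured sector of radius `r`
satisfies `‖μ‖_g ≤ C·‖μ‖^λ` and, provided `e(μ) + C‖μ‖ < π/2`, the rugosity of `g ∘ μ` is
bounded by the rugosity of `μ` plus `C·‖μ‖`. -/
theorem rugosity_estimate_forward
    (l : ℝ) (hl : 0 < l) (R₀ : ℝ) (hR₀ : 0 < R₀)
    (h : ℂ → ℂ) (hh : DifferentiableOn ℂ h (Metric.ball 0 R₀)) (hh0 : h 0 ≠ 0)
    (α β : ℝ) (hα : -Real.pi < α) (hαβ : α ≤ β) (hβ : β < Real.pi)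
    (g : ℂ → ℂ) (hg : ∀ z : ℂ, g z = z ^ (l : ℂ) * h z) :
    ∃ r ∈ Set.Ioo (0 : ℝ) R₀, ∃ C > (0 : ℝ),
      ∀ (μ μ' : ℝ → ℂ) (M : ℝ),
        (∀ s ∈ Set.Icc (0 : ℝ) 1, HasDerivWithinAt μ (μ' s) (Set.Icc (0 : ℝ) 1) s) →
        ContinuousOn μ' (Set.Icc (0 : ℝ) 1) →
        (∀ s ∈ Set.Icc (0 : ℝ) 1, μ' s ≠ 0) →
        (∀ s ∈ Set.Icc (0 : ℝ) 1, 0 < ‖μ s‖ ∧ ‖μ s‖ ≤ r) →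
        (∀ s ∈ Set.Icc (0 : ℝ) 1, α ≤ Complex.arg (μ s) ∧ Complex.arg (μ s) ≤ β) →
        IsGreatest ((fun s => ‖μ s‖) '' Set.Icc (0 : ℝ) 1) M →
        (∀ s ∈ Set.Icc (0 : ℝ) 1, ‖g (μ s)‖ ≤ C * M ^ l) ∧
        ((⨆ s : Set.Icc (0 : ℝ) 1, rugosityBracket (μ' s / (Complex.I * μ s))) +
              ENNReal.ofReal (C * M) < ENNReal.ofReal (Real.pi / 2) →
          ∀ s ∈ Set.Icc (0 : ℝ) 1,
            rugosityBracket
                (derivWithin (g ∘ μ) (Set.Icc (0 : ℝ) 1) s / (Complex.I * g (μ s))) ≤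
              (⨆ s : Set.Icc (0 : ℝ) 1, rugosityBracket (μ' s / (Complex.I * μ s))) +
                ENNReal.ofReal (C * M)) := by
  have ha : 0 < ‖h 0‖ := norm_pos_iff.mpr hh0
  set a := ‖h 0‖ with ha_def
  have hcont : ContinuousAt h 0 :=
    (hh.differentiableAt (Metric.isOpen_ball.mem_nhds (by simpa using hR₀))).continuousAt
  obtain ⟨δ, hδpos, hδ⟩ := Metric.continuousAt_iff.1 hcont (a / 2) (by positivity)
  set r₁ : ℝ := min (R₀ / 2) (δ / 2) with hr₁def
  have hr₁pos : 0 < r₁ := lt_min (by positivity) (by positivity)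
  have hr₁R : r₁ ≤ R₀ / 2 := min_le_left _ _
  have hr₁δ : r₁ ≤ δ / 2 := min_le_right _ _
  have hr₁sub : Metric.closedBall (0 : ℂ) r₁ ⊆ Metric.ball 0 R₀ := by
    intro z hz
    rw [Metric.mem_closedBall] at hz
    rw [Metric.mem_ball]
    linarith
  have hhball : ∀ z ∈ Metric.closedBall (0 : ℂ) r₁,
      a / 2 ≤ ‖h z‖ ∧ ‖h z‖ ≤ 3 * a / 2 := by
    intro z hz
    rw [Metric.mem_closedBall] at hz
    have hd : dist z 0 < δ := by linarith
    have h2 := hδ hd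
    rw [Complex.dist_eq] at h2
    constructor
    · have t1 : a ≤ ‖h 0 - h z‖ + ‖h z‖ := by
        calc a = ‖h 0 - h z + h z‖ := by rw [sub_add_cancel]
        _ ≤ _ := norm_add_le _ _
      rw [norm_sub_rev] at t1
      linarith
    · have t2 : ‖h z‖ ≤ ‖h z - h 0‖ + a := by
        calc ‖h z‖ = ‖h z - h 0 + h 0‖ := by ring_nf
        _ ≤ _ := norm_add_le _ _
      linarith
  have hdercont : ContinuousOn (deriv h) (Metric.closedBall (0 : ℂ) r₁) :=
    (((hh.analyticOnNhd Metric.isOpen_ball).deriv).continuousOn).mono hr₁sub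
  obtain ⟨B, hB⟩ := (isCompact_closedBall (0 : ℂ) r₁).exists_bound_of_continuousOn hdercont
  have hB0 : 0 ≤ B := le_trans (norm_nonneg _) (hB 0 (Metric.mem_closedBall_self hr₁pos.le))
  set K : ℝ := 2 * (B + 1) / a with hKdef
  have hKpos : 0 < K := by positivity
  have hKa : K * a = 2 * (B + 1) := by rw [hKdef, div_mul_cancel₀ _ ha.ne']
  have hzeta : ∀ z ∈ Metric.closedBall (0 : ℂ) r₁,
      ‖z * deriv h z / h z‖ ≤ K * ‖z‖ := by
    intro z hz
    have h1 := (hhball z hz).1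
    have hBz : ‖deriv h z‖ ≤ B := by
      have := hB z hz; exact this
    rw [norm_div, norm_mul,
        div_le_iff₀ (lt_of_lt_of_le (by positivity) h1)]
    have h3 : K * ‖z‖ * (a / 2) ≤ K * ‖z‖ * ‖h z‖ :=
      mul_le_mul_of_nonneg_left h1 (mul_nonneg hKpos.le (norm_nonneg z))
    have h4 : ‖z‖ * ‖deriv h z‖ ≤ ‖z‖ * B :=
      mul_le_mul_of_nonneg_left hBz (norm_nonneg z)
    have h5 : K * ‖z‖ * (a / 2) = (B + 1) * ‖z‖ := by
      have : K * ‖z‖ * (a / 2) = K * a / 2 * ‖z‖ := by ring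
      rw [this, hKa]; ring
    nlinarith [norm_nonneg z]
  set r : ℝ := min r₁ (l / (2 * K)) with hrdef
  have hrpos : 0 < r := lt_min hr₁pos (by positivity)
  have hrr₁ : r ≤ r₁ := min_le_left _ _
  have hrK : r ≤ l / (2 * K) := min_le_right _ _
  have hrR₀ : r < R₀ := by linarith
  set C : ℝ := max (3 * a / 2) (Real.pi * K / l) + 1 with hCdef
  have hC1 : 3 * a / 2 ≤ C := by
    have := le_max_left (3 * a / 2) (Real.pi * K / l); linarith
  have hC2 : Real.pi * K / l ≤ C := by
    have := le_max_right (3 * a / 2) (Real.pi * K / l); linarith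
  have hCpos : 0 < C := lt_of_lt_of_le (by positivity) hC1
  refine ⟨r, ⟨hrpos, hrR₀⟩, C, hCpos, ?_⟩
  intro μ μ' M hμd hμ'c hμ'0 hμr hμarg hM
  obtain ⟨⟨s₀, hs₀, hs₀M⟩, hMub⟩ := hM
  have hMpos : 0 < M := hs₀M ▸ (hμr s₀ hs₀).1
  have hMle : ∀ s ∈ Set.Icc (0 : ℝ) 1, ‖μ s‖ ≤ M := fun s hs => hMub ⟨s, hs, rfl⟩
  have hMr : M ≤ r := hs₀M ▸ (hμr s₀ hs₀).2
  have hfacts : ∀ s ∈ Set.Icc (0 : ℝ) 1, (μ s ≠ 0) ∧ μ s ∈ Metric.closedBall (0 : ℂ) r₁ ∧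
      μ s ∈ Complex.slitPlane ∧ h (μ s) ≠ 0 := by
    intro s hs
    have h1 := (hμr s hs).1
    have h2 := (hμr s hs).2
    have hz0 : μ s ≠ 0 := by intro h0; rw [h0, norm_zero] at h1; exact lt_irrefl _ h1
    have hball : μ s ∈ Metric.closedBall (0 : ℂ) r₁ := by
      rw [Metric.mem_closedBall, Complex.dist_eq, sub_zero]
      exact h2.trans hrr₁
    have hslit : μ s ∈ Complex.slitPlane :=
      Complex.mem_slitPlane_iff_arg.2 ⟨by linarith [(hμarg s hs).2], hz0⟩
    have hhz : h (μ s) ≠ 0 := by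
      intro h0
      have hlow := (hhball _ hball).1
      rw [h0, norm_zero] at hlow
      linarith
    exact ⟨hz0, hball, hslit, hhz⟩
  constructor
  · intro s hs
    obtain ⟨hz0, hball, -, -⟩ := hfacts s hs
    rw [hg, norm_mul, Complex.norm_cpow_real]
    have h1 := (hhball _ hball).2
    have h2 : ‖μ s‖ ^ l ≤ M ^ l :=
      Real.rpow_le_rpow (norm_nonneg _) (hMle s hs) hl.le
    have h3 : (0 : ℝ) ≤ M ^ l := Real.rpow_nonneg hMpos.le l
    calc ‖μ s‖ ^ l * ‖h (μ s)‖ ≤ M ^ l * (3 * a / 2) :=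
          mul_le_mul h2 h1 (norm_nonneg _) h3
    _ ≤ C * M ^ l := by nlinarith
  · intro hE s hs
    obtain ⟨hz0, hball, hslit, hhz⟩ := hfacts s hs
    set z := μ s with hzdef
    set E := ⨆ s : Set.Icc (0 : ℝ) 1, rugosityBracket (μ' ↑s / (Complex.I * μ ↑s)) with hEdef
    set ζ := z * deriv h z / h z with hζdef
    have hζle : ‖ζ‖ ≤ K * ‖z‖ := hzeta z hball
    have hzr : ‖z‖ ≤ r := (hμr s hs).2
    have hζl : ‖ζ‖ ≤ l / 2 := by
      have t : K * ‖z‖ ≤ K * (l / (2 * K)) :=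
        mul_le_mul_of_nonneg_left (hzr.trans hrK) hKpos.le
      have : K * (l / (2 * K)) = l / 2 := by field_simp
      linarith
    set w₂ : ℂ := (l : ℂ) + ζ with hw₂def
    have hζre : |ζ.re| ≤ ‖ζ‖ := Complex.abs_re_le_norm ζ
    have hw₂re : l / 2 ≤ w₂.re := by
      have : w₂.re = l + ζ.re := by simp [hw₂def]
      rw [this]
      have := neg_abs_le ζ.re
      linarith
    have hw₂repos : 0 < w₂.re := lt_of_lt_of_le (by linarith) hw₂re
    have hw₂im : |w₂.im| ≤ K * ‖z‖ := by
      have : w₂.im = ζ.im := by simp [hw₂def]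
      rw [this]
      exact le_trans (Complex.abs_im_le_norm ζ) hζle
    have hw₂0 : w₂ ≠ 0 := fun hc => by rw [hc] at hw₂repos; simp at hw₂repos
    have hw₂abs : l / 2 ≤ ‖w₂‖ := hw₂re.trans (Complex.re_le_norm w₂)
    have harg₂ : |Complex.arg w₂| ≤ C * M := by
      have h1 := aux_arg_le hw₂repos
      have h2 : |w₂.im| / ‖w₂‖ ≤ K * ‖z‖ / (l / 2) :=
        div_le_div₀ (by positivity) hw₂im (by positivity) hw₂abs
      have h3 : ‖z‖ ≤ M := hMle s hs
      have h4 : |Complex.arg w₂| ≤ Real.pi / 2 * (K * ‖z‖ / (l / 2)) :=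
        h1.trans (mul_le_mul_of_nonneg_left h2 (by positivity))
      have h5 : Real.pi / 2 * (K * ‖z‖ / (l / 2)) = Real.pi * K / l * ‖z‖ := by
        field_simp
      rw [h5] at h4
      have h6 : Real.pi * K / l * ‖z‖ ≤ C * M := by
        have hpk : 0 ≤ Real.pi * K / l := by positivity
        nlinarith [norm_nonneg z]
      exact h4.trans h6
    set w₁ := μ' s / (Complex.I * z) with hw₁def
    have hw₁0 : w₁ ≠ 0 := div_ne_zero (hμ'0 s hs) (mul_ne_zero Complex.I_ne_zero hz0)
    have hEne : E ≠ ⊤ := (le_self_add.trans_lt hE).ne_top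
    have hbr₁ : rugosityBracket w₁ ≤ E := by
      rw [hEdef]
      exact le_iSup (fun t : Set.Icc (0 : ℝ) 1 =>
        rugosityBracket (μ' ↑t / (Complex.I * μ ↑t))) ⟨s, hs⟩
    have hbr₁ne : rugosityBracket w₁ ≠ ⊤ := by
      intro hc; rw [hc, top_le_iff] at hbr₁; exact hEne hbr₁
    have harg₁lt : |Complex.arg w₁| < Real.pi / 2 := by
      by_contra hcon
      rw [rugosityBracket, if_neg hcon] at hbr₁ne
      exact hbr₁ne rfl
    have hbr₁eq : rugosityBracket w₁ = ENNReal.ofReal |Complex.arg w₁| := by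
      rw [rugosityBracket, if_pos harg₁lt]
    have harg₁E : |Complex.arg w₁| ≤ E.toReal := by
      rw [hbr₁eq] at hbr₁
      exact (ENNReal.ofReal_le_iff_le_toReal hEne).1 hbr₁
    have hCM0 : (0 : ℝ) ≤ C * M := by positivity
    have hsum : E.toReal + C * M < Real.pi / 2 := by
      have h1 : (E + ENNReal.ofReal (C * M)).toReal < (ENNReal.ofReal (Real.pi / 2)).toReal :=
        (ENNReal.toReal_lt_toReal (ENNReal.add_ne_top.2 ⟨hEne, ENNReal.ofReal_ne_top⟩)
          ENNReal.ofReal_ne_top).2 hE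
      rwa [ENNReal.toReal_add hEne ENNReal.ofReal_ne_top, ENNReal.toReal_ofReal hCM0,
        ENNReal.toReal_ofReal (by positivity)] at h1
    have hdh : HasDerivAt h (deriv h z) z :=
      (hh.differentiableAt (Metric.isOpen_ball.mem_nhds (hr₁sub hball))).hasDerivAt
    have hcp : HasDerivAt (fun w : ℂ => w ^ (l : ℂ)) ((l : ℂ) * z ^ ((l : ℂ) - 1)) z :=
      (Complex.hasStrictDerivAt_cpow_const hslit).hasDerivAt
    have hG : HasDerivAt (fun w => w ^ (l : ℂ) * h w)
        ((l : ℂ) * z ^ ((l : ℂ) - 1) * h z + z ^ (l : ℂ) * deriv h z) z := hcp.mul hdh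
    have hgeq : g = fun w => w ^ (l : ℂ) * h w := funext hg
    have hcomp : HasDerivWithinAt (g ∘ μ)
        (((l : ℂ) * z ^ ((l : ℂ) - 1) * h z + z ^ (l : ℂ) * deriv h z) * μ' s)
        (Set.Icc (0 : ℝ) 1) s := by
      rw [hgeq]
      exact hG.comp_hasDerivWithinAt s (hμd s hs)
    have hDW : derivWithin (g ∘ μ) (Set.Icc (0 : ℝ) 1) s =
        ((l : ℂ) * z ^ ((l : ℂ) - 1) * h z + z ^ (l : ℂ) * deriv h z) * μ' s :=
      hcomp.derivWithin (uniqueDiffOn_Icc one_pos s hs)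
    have hzl0 : z ^ (l : ℂ) ≠ 0 := by
      rw [Ne, Complex.cpow_eq_zero_iff]
      tauto
    have hzpow : z ^ ((l : ℂ) - 1) = z ^ (l : ℂ) / z := by
      rw [Complex.cpow_sub _ _ hz0, Complex.cpow_one]
    have hq : ((l : ℂ) * z ^ ((l : ℂ) - 1) * h z + z ^ (l : ℂ) * deriv h z) * μ' s /
        (Complex.I * (z ^ (l : ℂ) * h z)) = w₁ * w₂ := by
      rw [hzpow, hw₁def, hw₂def, hζdef]
      field_simp
    rw [hDW, hg z, hq]
    have hw₂lt : |Complex.arg w₂| < Real.pi / 2 :=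
      Complex.abs_arg_lt_pi_div_two_iff.2 (Or.inl hw₂repos)
    have hsum2 : |Complex.arg w₁| + |Complex.arg w₂| < Real.pi / 2 :=
      lt_of_le_of_lt (add_le_add harg₁E harg₂) hsum
    have habsadd := abs_add_le (Complex.arg w₁) (Complex.arg w₂)
    have hmem : Complex.arg w₁ + Complex.arg w₂ ∈ Set.Ioc (-Real.pi) Real.pi := by
      have hpi := Real.pi_pos
      have h1 : |Complex.arg w₁ + Complex.arg w₂| < Real.pi / 2 :=
        lt_of_le_of_lt habsadd hsum2
      rw [abs_lt] at h1
      constructor <;> linarith [h1.1, h1.2]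
    have hargmul : Complex.arg (w₁ * w₂) = Complex.arg w₁ + Complex.arg w₂ :=
      Complex.arg_mul hw₁0 hw₂0 hmem
    have hqlt : |Complex.arg (w₁ * w₂)| < Real.pi / 2 := by
      rw [hargmul]
      exact lt_of_le_of_lt habsadd hsum2
    rw [rugosityBracket, if_pos hqlt, hargmul]
    calc ENNReal.ofReal |Complex.arg w₁ + Complex.arg w₂|
        ≤ ENNReal.ofReal (|Complex.arg w₁| + |Complex.arg w₂|) :=
          ENNReal.ofReal_le_ofReal habsadd
      _ = ENNReal.ofReal |Complex.arg w₁| + ENNReal.ofReal |Complex.arg w₂| :=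
          ENNReal.ofReal_add (abs_nonneg _) (abs_nonneg _)
      _ ≤ E + ENNReal.ofReal (C * M) :=
          add_le_add (hbr₁eq ▸ hbr₁) (ENNReal.ofReal_le_ofReal harg₂)
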